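/- arXiv:1211.6802 — 5 statements merged into one kernel-verified Lean document; each statement's English description precedes it below -/
import Mathlib

section
/- For r ≥ 0 and n ≥ 0, the negative-order Frobenius-Euler polynomial satisfies H_n^{(-r)}(x|λ) = (1/(1-λ)^r) ∑_{j=0}^{r} C(r,j)(-λ)^{r-j}(x+j)^n. -/
open Finset PowerSeries

lemma mk_eq_rescale_exp (x : ℂ) :
    (PowerSeries.mk fun n => x ^ n * ((n.factorial : ℂ))⁻¹) = rescale x (PowerSeries.exp ℂ) := by
  ext n
  simp [coeff_rescale, coeff_exp, map_div₀, map_natCast]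

/-- Negative-order Frobenius-Euler polynomials `Hneg r n x = Hₙ⁽⁻ʳ⁾(x|λ)`, defined by
`((e^t-λ)/(1-λ))^r e^{xt} = ∑ Hₙ⁽⁻ʳ⁾(x|λ) tⁿ/n!`, satisfy
`Hₙ⁽⁻ʳ⁾(x|λ) = (1/(1-λ)ʳ) ∑_{j=0}^{r} C(r,j)(-λ)^{r-j}(x+j)ⁿ`. -/
theorem frobenius_euler_neg_order (lam : ℂ) (hlam : lam ≠ 1)
    (Hneg : ℕ → ℕ → ℂ → ℂ)
    (hH : ∀ (r : ℕ) (x : ℂ),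
      PowerSeries.C (R := ℂ) ((1 - lam) ^ r) *
          (PowerSeries.mk fun n => Hneg r n x * ((n.factorial : ℂ))⁻¹) =
        (PowerSeries.exp ℂ - PowerSeries.C (R := ℂ) lam) ^ r *
          PowerSeries.mk fun n => x ^ n * ((n.factorial : ℂ))⁻¹)
    (r n : ℕ) (x : ℂ) :
    Hneg r n x = ((1 - lam) ^ r)⁻¹ *
      ∑ j ∈ range (r + 1), (r.choose j : ℂ) * (-lam) ^ (r - j) * (x + j) ^ n := by
  have key := congrArg (PowerSeries.coeff n) (hH r x)
  have hrhs : (PowerSeries.exp ℂ - PowerSeries.C lam) ^ r *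
      PowerSeries.mk (fun n => x ^ n * ((n.factorial : ℂ))⁻¹) =
      ∑ j ∈ range (r + 1), PowerSeries.C ((r.choose j : ℂ) * (-lam) ^ (r - j)) *
        PowerSeries.mk (fun n => (x + j) ^ n * ((n.factorial : ℂ))⁻¹) := by
    rw [sub_eq_add_neg, add_pow, sum_mul]
    refine sum_congr rfl fun j hj => ?_
    have h1 : (PowerSeries.exp ℂ) ^ j * (PowerSeries.mk fun n => x ^ n * ((n.factorial : ℂ))⁻¹)
        = PowerSeries.mk fun n => (x + j) ^ n * ((n.factorial : ℂ))⁻¹ := by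
      rw [mk_eq_rescale_exp, mk_eq_rescale_exp, exp_pow_eq_rescale_exp,
        exp_mul_exp_eq_exp_add]
      rw [add_comm]
    calc (PowerSeries.exp ℂ) ^ j * (-PowerSeries.C lam) ^ (r - j) * (r.choose j : ℕ) *
          (PowerSeries.mk fun n => x ^ n * ((n.factorial : ℂ))⁻¹)
        = PowerSeries.C ((r.choose j : ℂ) * (-lam) ^ (r - j)) *
          ((PowerSeries.exp ℂ) ^ j * (PowerSeries.mk fun n => x ^ n * ((n.factorial : ℂ))⁻¹)) := by
          rw [map_mul, map_pow, map_neg, map_natCast]; ring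
      _ = _ := by rw [h1]
  rw [hrhs] at key
  simp only [coeff_C_mul, coeff_mk, map_sum] at key
  have hfac : ((n.factorial : ℂ))⁻¹ ≠ 0 := by
    simp [Nat.factorial_ne_zero]
  have hpow : ((1 : ℂ) - lam) ^ r ≠ 0 := pow_ne_zero _ (sub_ne_zero.mpr hlam.symm)
  have h2 : (1 - lam) ^ r * Hneg r n x =
      ∑ j ∈ range (r + 1), (r.choose j : ℂ) * (-lam) ^ (r - j) * (x + j) ^ n :=
    mul_right_cancel₀ hfac (by
      rw [sum_mul, mul_assoc]
      exact key.trans (sum_congr rfl fun j _ => (mul_assoc _ _ _).symm))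
  field_simp
  linear_combination h2
end

section
/- Let p(x) be a polynomial of degree at most n with coefficients in ℚ(λ). Then p(x) = ∑_{k=0}^{n} C_k H_k^{(r)}(x|λ), where C_k = (1/(k!(1-λ)^r)) ∑_{j=0}^{r} C(r,j)(-λ)^{r-j} (D^k p)(j), and D denotes differentiation d/dx. -/
open Finset PowerSeries

theorem aux_coeff_pow (lam : ℂ) (r l : ℕ) :
    (PowerSeries.coeff l) ((PowerSeries.exp ℂ - PowerSeries.C lam) ^ r) =
    ∑ j ∈ range (r + 1), (r.choose j : ℂ) * (-lam) ^ (r - j) * (j : ℂ) ^ l * ((l.factorial : ℂ))⁻¹ := by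
  rw [sub_eq_add_neg, ← map_neg, add_pow, map_sum]
  refine Finset.sum_congr rfl fun j _ => ?_
  rw [← map_pow, exp_pow_eq_rescale_exp]
  have : ((r.choose j : ℕ) : ℂ⟦X⟧) = PowerSeries.C (r.choose j : ℂ) := by
    simp [map_natCast]
  rw [this, mul_assoc, ← map_mul, PowerSeries.coeff_mul_C, coeff_rescale, coeff_exp]
  push_cast
  ring_nf

theorem aux_key (lam : ℂ) (r : ℕ) (H : ℕ → ℕ → ℂ → ℂ)
    (hH : ∀ (r : ℕ) (x : ℂ),
      (PowerSeries.mk fun n => H r n x * ((n.factorial : ℂ))⁻¹) *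
        (PowerSeries.exp ℂ - PowerSeries.C lam) ^ r =
      PowerSeries.C ((1 - lam) ^ r) *
        PowerSeries.mk fun n => x ^ n * ((n.factorial : ℂ))⁻¹)
    (x : ℂ) (m : ℕ) :
    ∑ k ∈ range (m + 1), (H r k x * ((k.factorial : ℂ))⁻¹) *
      ∑ j ∈ range (r + 1), (r.choose j : ℂ) * (-lam) ^ (r - j) * (j : ℂ) ^ (m - k) *
        (((m - k).factorial : ℂ))⁻¹
    = (1 - lam) ^ r * (x ^ m * ((m.factorial : ℂ))⁻¹) := by
  have h := congrArg (PowerSeries.coeff m) (hH r x)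
  rw [PowerSeries.coeff_mul, Finset.Nat.sum_antidiagonal_eq_sum_range_succ_mk,
    PowerSeries.coeff_C_mul] at h
  simp only [PowerSeries.coeff_mk] at h
  rw [← h]
  refine Finset.sum_congr rfl fun k _ => ?_
  rw [aux_coeff_pow]

theorem aux_mono (lam : ℂ) (hlam : lam ≠ 1) (r : ℕ) (H : ℕ → ℕ → ℂ → ℂ)
    (hH : ∀ (r : ℕ) (x : ℂ),
      (PowerSeries.mk fun n => H r n x * ((n.factorial : ℂ))⁻¹) *
        (PowerSeries.exp ℂ - PowerSeries.C lam) ^ r =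
      PowerSeries.C ((1 - lam) ^ r) *
        PowerSeries.mk fun n => x ^ n * ((n.factorial : ℂ))⁻¹)
    (x : ℂ) (n m : ℕ) (hm : m ≤ n) :
    x ^ m = ∑ k ∈ range (n + 1),
      (((k.factorial : ℂ) * (1 - lam) ^ r)⁻¹ *
        ∑ j ∈ range (r + 1), (r.choose j : ℂ) * (-lam) ^ (r - j) *
          ((m.descFactorial k : ℂ) * (j : ℂ) ^ (m - k))) * H r k x := by
  have hl : (1 - lam) ≠ 0 := sub_ne_zero.2 (Ne.symm hlam)
  have hlr : (1 - lam) ^ r ≠ 0 := pow_ne_zero _ hl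
  -- restrict the sum to range (m+1)
  rw [← Finset.sum_subset (Finset.range_subset_range.2 (Nat.succ_le_succ hm))
      (fun k _ hk => ?_)]
  · -- main computation
    have key := aux_key lam r H hH x m
    have hmf : ((m.factorial : ℂ)) ≠ 0 := Nat.cast_ne_zero.2 m.factorial_ne_zero
    have hx : x ^ m = ((1 - lam) ^ r)⁻¹ * (m.factorial : ℂ) *
        ∑ k ∈ range (m + 1), (H r k x * ((k.factorial : ℂ))⁻¹) *
          ∑ j ∈ range (r + 1), (r.choose j : ℂ) * (-lam) ^ (r - j) * (j : ℂ) ^ (m - k) *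
            (((m - k).factorial : ℂ))⁻¹ := by
      rw [key]; field_simp
    rw [hx, Finset.mul_sum]
    refine Finset.sum_congr rfl fun k hk => ?_
    have hkm : k ≤ m := Nat.lt_succ_iff.1 (Finset.mem_range.1 hk)
    have hd : (((m - k).factorial : ℂ)) * (m.descFactorial k : ℂ) = (m.factorial : ℂ) := by
      exact_mod_cast congrArg (Nat.cast : ℕ → ℂ) (Nat.factorial_mul_descFactorial hkm)
    have hkf : ((k.factorial : ℂ)) ≠ 0 := Nat.cast_ne_zero.2 k.factorial_ne_zero
    have hmkf : (((m - k).factorial : ℂ)) ≠ 0 := Nat.cast_ne_zero.2 (m - k).factorial_ne_zero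
    have hdesc : (m.descFactorial k : ℂ) = (m.factorial : ℂ) * (((m - k).factorial : ℂ))⁻¹ := by
      field_simp [← hd]
      rw [mul_comm, hd]
    simp only [hdesc, Finset.mul_sum, Finset.sum_mul]
    refine Finset.sum_congr rfl fun j _ => ?_
    field_simp
  · -- vanishing terms for k > m
    have : m.descFactorial k = 0 := Nat.descFactorial_eq_zero_iff_lt.2
      (by simpa using fun h => hk (Finset.mem_range.2 h))
    simp [this]

/-- Expansion of a polynomial `p` of degree ≤ n in the basis of order-`r`
Frobenius-Euler polynomials:
`p(x) = ∑_{k=0}^{n} C_k H_k⁽ʳ⁾(x|λ)` with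
`C_k = (1/(k!(1-λ)ʳ)) ∑_{j=0}^{r} C(r,j)(-λ)^{r-j} (Dᵏp)(j)`. -/
theorem frobenius_euler_basis_expansion (lam : ℂ) (hlam : lam ≠ 1) (r : ℕ)
    (H : ℕ → ℕ → ℂ → ℂ)
    (hH : ∀ (r : ℕ) (x : ℂ),
      (PowerSeries.mk fun n => H r n x * ((n.factorial : ℂ))⁻¹) *
        (PowerSeries.exp ℂ - PowerSeries.C lam) ^ r =
      PowerSeries.C ((1 - lam) ^ r) *
        PowerSeries.mk fun n => x ^ n * ((n.factorial : ℂ))⁻¹)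
    (n : ℕ) (p : Polynomial ℂ) (hp : p.natDegree ≤ n) (x : ℂ) :
    p.eval x = ∑ k ∈ range (n + 1),
      (((k.factorial : ℂ) * (1 - lam) ^ r)⁻¹ *
        ∑ j ∈ range (r + 1), (r.choose j : ℂ) * (-lam) ^ (r - j) *
          (Polynomial.derivative^[k] p).eval (j : ℂ)) * H r k x := by
  have hlt : p.natDegree < n + 1 := Nat.lt_succ_of_le hp
  -- evaluate iterated derivatives on the monomial expansion
  have hder : ∀ (k : ℕ) (y : ℂ), (Polynomial.derivative^[k] p).eval y =
      ∑ m ∈ range (n + 1), p.coeff m * ((m.descFactorial k : ℂ) * y ^ (m - k)) := by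
    intro k y
    conv_lhs => rw [p.as_sum_range' (n + 1) hlt]
    rw [Polynomial.iterate_derivative_sum, Polynomial.eval_finset_sum]
    refine Finset.sum_congr rfl fun m _ => ?_
    rw [← Polynomial.C_mul_X_pow_eq_monomial, Polynomial.iterate_derivative_C_mul,
      Polynomial.iterate_derivative_X_pow_eq_natCast_mul]
    simp [mul_assoc]
  rw [Polynomial.eval_eq_sum_range' hlt]
  have hmain : ∀ m ∈ range (n + 1), p.coeff m * x ^ m =
      p.coeff m * ∑ k ∈ range (n + 1),
        (((k.factorial : ℂ) * (1 - lam) ^ r)⁻¹ *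
          ∑ j ∈ range (r + 1), (r.choose j : ℂ) * (-lam) ^ (r - j) *
            ((m.descFactorial k : ℂ) * (j : ℂ) ^ (m - k))) * H r k x := by
    intro m hm
    rw [← aux_mono lam hlam r H hH x n m (Nat.lt_succ_iff.1 (Finset.mem_range.1 hm))]
  rw [Finset.sum_congr rfl hmain]
  simp only [hder, Finset.mul_sum, Finset.sum_mul]
  rw [Finset.sum_comm]
  refine Finset.sum_congr rfl fun k _ => ?_
  rw [Finset.sum_comm]
  refine Finset.sum_congr rfl fun j _ => ?_
  refine Finset.sum_congr rfl fun m _ => ?_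
  ring
end

section
/- For all n ≥ 0 and r ≥ 0: H_n^{(-r)}(0|λ) = (r!/(1-λ)^r) S_λ(n,r), where S_λ(n,r) = (1/r!) ∑_{j=0}^{r} C(r,j)(-λ)^{r-j} j^n. -/
open Finset PowerSeries

/-- `Hₙ⁽⁻ʳ⁾(0|λ) = (r!/(1-λ)ʳ) S_λ(n,r)` with
`S_λ(n,r) = (1/r!) ∑_{j=0}^{r} C(r,j)(-λ)^{r-j} jⁿ`. -/
theorem frobenius_euler_neg_order_stirling (lam : ℂ) (hlam : lam ≠ 1)
    (Hneg : ℕ → ℕ → ℂ → ℂ)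
    (hH : ∀ (r : ℕ) (x : ℂ),
      PowerSeries.C (R := ℂ) ((1 - lam) ^ r) *
          (PowerSeries.mk fun n => Hneg r n x * ((n.factorial : ℂ))⁻¹) =
        (PowerSeries.exp ℂ - PowerSeries.C (R := ℂ) lam) ^ r *
          PowerSeries.mk fun n => x ^ n * ((n.factorial : ℂ))⁻¹)
    (n r : ℕ) :
    Hneg r n 0 = ((r.factorial : ℂ) / (1 - lam) ^ r) *
      (((r.factorial : ℂ))⁻¹ *
        ∑ j ∈ range (r + 1), (r.choose j : ℂ) * (-lam) ^ (r - j) * (j : ℂ) ^ n) := by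
  have hone : (PowerSeries.mk fun n => (0 : ℂ) ^ n * ((n.factorial : ℂ))⁻¹) = 1 := by
    ext m
    rw [coeff_mk, coeff_one]
    cases m <;> simp
  have h := hH r 0
  rw [hone, mul_one] at h
  have hc := congrArg (PowerSeries.coeff n) h
  rw [coeff_C_mul, coeff_mk] at hc
  conv at hc => rhs; rw [sub_pow, map_sum]
  have hterm : ∀ j ∈ range (r + 1), (PowerSeries.coeff n)
      ((-1) ^ (j + r) * PowerSeries.exp ℂ ^ j * (PowerSeries.C) lam ^ (r - j) * (r.choose j : ℂ⟦X⟧)) =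
      (r.choose j : ℂ) * (-lam) ^ (r - j) * (j : ℂ) ^ n * ((n.factorial : ℂ))⁻¹ := by
    intro j hj
    have hjr : j ≤ r := Nat.lt_succ_iff.mp (mem_range.mp hj)
    have h1 : ((-1 : ℂ⟦X⟧)) ^ (j + r) = PowerSeries.C ((-1 : ℂ) ^ (j + r)) := by
      rw [map_pow, map_neg, map_one]
    have h2 : (r.choose j : ℂ⟦X⟧) = PowerSeries.C (r.choose j : ℂ) := by rw [map_natCast]
    have h3 : ((PowerSeries.C) lam) ^ (r - j) = PowerSeries.C (lam ^ (r - j)) := by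
      rw [map_pow]
    have hsign : ((-1 : ℂ)) ^ (j + r) * lam ^ (r - j) = (-lam) ^ (r - j) := by
      rw [show j + r = (r - j) + 2 * j from by omega, pow_add, pow_mul, neg_one_sq,
        one_pow, mul_one, ← neg_one_mul lam, mul_pow]
    rw [h1, h2, h3, exp_pow_eq_rescale_exp,
      show ∀ a b c : ℂ⟦X⟧, ∀ f : ℂ⟦X⟧, a * f * b * c = a * b * c * f from
        fun a b c f => by ring, ← map_mul, ← map_mul, coeff_C_mul, coeff_rescale, coeff_exp]
    push_cast
    rw [one_div]
    linear_combination ((r.choose j : ℂ) * (j : ℂ) ^ n * ((n.factorial : ℂ))⁻¹) * hsign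
  rw [Finset.sum_congr rfl hterm, ← Finset.sum_mul] at hc
  have hfac : ((n.factorial : ℂ)) ≠ 0 := Nat.cast_ne_zero.mpr n.factorial_ne_zero
  have hrfac : ((r.factorial : ℂ)) ≠ 0 := Nat.cast_ne_zero.mpr r.factorial_ne_zero
  have hpow : ((1 : ℂ) - lam) ^ r ≠ 0 := pow_ne_zero _ (sub_ne_zero.mpr (Ne.symm hlam))
  field_simp at hc
  field_simp
  linear_combination hc
end

section
/- For all r, s, n ≥ 0 with s ≤ r: H_n^{(r-s)}(x|λ) = ∑_{l=0}^{n} [ C(n,l) ∑_{m=0}^{min(s,l)} C(s,m)/(1-λ)^m · T(l,m) ] H_{n-l}^{(r)}(x|λ), where T(l,m) = ∑_{k_1+⋯+k_m=l, each k_j ≥ 1} (l choose k_1,…,k_m) is the number of surjections from an l-set to an m-set counted via multinomial coefficients (with T(0,0)=1, T(l,0)=0 for l≥1). -/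
open Finset PowerSeries

/-- `T l m = ∑_{k₁+⋯+k_m = l, k_j ≥ 1} (l choose k₁,…,k_m)`, the number of
surjections from an `l`-set onto an `m`-set (`T 0 0 = 1`, `T l 0 = 0` for `l ≥ 1`). -/
def surjCount (l m : ℕ) : ℕ :=
  ∑ k ∈ (Finset.Nat.antidiagonalTuple m l).filter (fun k => ∀ j, 1 ≤ k j),
    Nat.multinomial Finset.univ k


lemma coeff_exp_sub_one (k : ℕ) :
    PowerSeries.coeff (R := ℂ) k (PowerSeries.exp ℂ - 1) =
      if k = 0 then 0 else ((k.factorial : ℂ))⁻¹ := by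
  rw [map_sub, PowerSeries.coeff_exp, PowerSeries.coeff_one]
  rcases eq_or_ne k 0 with rfl | h <;> simp [*, one_div]

lemma coeff_exp_sub_one_pow (m l : ℕ) :
    PowerSeries.coeff (R := ℂ) l ((PowerSeries.exp ℂ - 1) ^ m) =
      (surjCount l m : ℂ) * ((l.factorial : ℂ))⁻¹ := by
  rw [PowerSeries.coeff_pow]
  have hbij : ∀ g : ℕ → ℂ,
      ∑ f ∈ finsuppAntidiag (range m) l, ∏ i ∈ range m, g (f i)
        = ∑ k ∈ Finset.Nat.antidiagonalTuple m l, ∏ i, g (k i) := by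
    intro g
    refine Finset.sum_nbij' (fun f => fun j : Fin m => f j)
      (fun k => Finsupp.onFinset (range m) (fun t => if h : t < m then k ⟨t, h⟩ else 0)
        (fun t ht => by rw [mem_range]; by_contra h; simp [h] at ht)) ?_ ?_ ?_ ?_ ?_
    · intro f hf
      rw [mem_finsuppAntidiag] at hf
      rw [Finset.Nat.mem_antidiagonalTuple, ← hf.1, Fin.sum_univ_eq_sum_range]
    · intro k hk
      rw [Finset.Nat.mem_antidiagonalTuple] at hk
      rw [mem_finsuppAntidiag]
      refine ⟨?_, Finsupp.support_onFinset_subset⟩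
      rw [← Fin.sum_univ_eq_sum_range (fun t => _), ← hk]
      exact Finset.sum_congr rfl fun i _ => by simp [Finsupp.onFinset_apply, i.isLt]
    · intro f hf
      rw [mem_finsuppAntidiag] at hf
      ext t
      simp only [Finsupp.onFinset_apply]
      split_ifs with h
      · rfl
      · symm
        by_contra hne
        exact h (mem_range.mp (hf.2 (Finsupp.mem_support_iff.mpr hne)))
    · intro k hk
      funext j
      simp [Finsupp.onFinset_apply, j.isLt]
    · intro f hf
      rw [← Fin.prod_univ_eq_prod_range (fun t => _)]
  calc ∑ f ∈ finsuppAntidiag (range m) l, ∏ i ∈ range m,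
        PowerSeries.coeff (R := ℂ) (f i) (PowerSeries.exp ℂ - 1)
      = ∑ k ∈ Finset.Nat.antidiagonalTuple m l, ∏ i : Fin m,
          (if k i = 0 then 0 else ((k i).factorial : ℂ)⁻¹) := by
        rw [← hbij fun t => if t = 0 then (0:ℂ) else (t.factorial : ℂ)⁻¹]
        exact Finset.sum_congr rfl fun f _ => Finset.prod_congr rfl fun i _ =>
          coeff_exp_sub_one (f i)
    _ = ∑ k ∈ (Finset.Nat.antidiagonalTuple m l).filter (fun k => ∀ j, 1 ≤ k j),
          ∏ i : Fin m, ((k i).factorial : ℂ)⁻¹ := by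
        rw [← Finset.sum_filter_add_sum_filter_not _ (fun k : Fin m → ℕ => ∀ j, 1 ≤ k j)]
        have h2 : ∑ k ∈ (Finset.Nat.antidiagonalTuple m l).filter
            (fun k => ¬ ∀ j, 1 ≤ k j), ∏ i : Fin m,
            (if k i = 0 then (0:ℂ) else ((k i).factorial : ℂ)⁻¹) = 0 := by
          refine Finset.sum_eq_zero fun k hk => ?_
          rw [mem_filter] at hk
          push_neg at hk
          obtain ⟨j, hj⟩ := hk.2
          exact Finset.prod_eq_zero (mem_univ j) (by simp [Nat.lt_one_iff.mp hj])
        rw [h2, add_zero]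
        refine Finset.sum_congr rfl fun k hk => Finset.prod_congr rfl fun i _ => ?_
        rw [mem_filter] at hk
        rw [if_neg (Nat.one_le_iff_ne_zero.mp (hk.2 i))]
    _ = (surjCount l m : ℂ) * ((l.factorial : ℂ))⁻¹ := by
        rw [surjCount, Nat.cast_sum, Finset.sum_mul]
        refine Finset.sum_congr rfl fun k hk => ?_
        rw [mem_filter, Finset.Nat.mem_antidiagonalTuple] at hk
        have hspec := Nat.multinomial_spec Finset.univ k
        rw [hk.1] at hspec
        have : ((∏ i : Fin m, (k i).factorial : ℕ) : ℂ) *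
            (Nat.multinomial Finset.univ k : ℂ) = (l.factorial : ℂ) := by
          exact_mod_cast congrArg (Nat.cast : ℕ → ℂ) hspec
        have hne : ((∏ i : Fin m, (k i).factorial : ℕ) : ℂ) ≠ 0 := by
          exact_mod_cast (Finset.prod_pos fun i _ => (k i).factorial_pos).ne'
        have hl : (l.factorial : ℂ) ≠ 0 := by exact_mod_cast l.factorial_pos.ne'
        have this' : (∏ i : Fin m, ((k i).factorial : ℂ)) *
            (Nat.multinomial Finset.univ k : ℂ) = (l.factorial : ℂ) := by
          push_cast at this; exact this
        have hne' : (∏ i : Fin m, ((k i).factorial : ℂ)) ≠ 0 := by push_cast at hne; exact hne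
        have hm : (Nat.multinomial Finset.univ k : ℂ) ≠ 0 := by
          exact_mod_cast (Nat.multinomial_pos _ _).ne'
        rw [Finset.prod_inv_distrib, inv_eq_iff_eq_inv, mul_inv, inv_inv]
        field_simp
        linear_combination this'

lemma surjCount_eq_zero {l m : ℕ} (h : l < m) : surjCount l m = 0 := by
  refine Finset.sum_eq_zero fun k hk => absurd ?_ (Nat.not_le.mpr h)
  rw [mem_filter, Finset.Nat.mem_antidiagonalTuple] at hk
  calc m = ∑ _i : Fin m, 1 := by simp
    _ ≤ ∑ i, k i := Finset.sum_le_sum fun i _ => hk.2 i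
    _ = l := hk.1


/-- For `s ≤ r`:
`Hₙ⁽ʳ⁻ˢ⁾(x|λ) = ∑_{l=0}^{n} [C(n,l) ∑_{m=0}^{min(s,l)} C(s,m)/(1-λ)ᵐ · T(l,m)] H_{n-l}⁽ʳ⁾(x|λ)`. -/
theorem frobenius_euler_order_reduction (lam : ℂ) (hlam : lam ≠ 1)
    (H : ℕ → ℕ → ℂ → ℂ)
    (hH : ∀ (r : ℕ) (x : ℂ),
      (PowerSeries.mk fun n => H r n x * ((n.factorial : ℂ))⁻¹) *
        (PowerSeries.exp ℂ - PowerSeries.C (R := ℂ) lam) ^ r =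
      PowerSeries.C (R := ℂ) ((1 - lam) ^ r) *
        PowerSeries.mk fun n => x ^ n * ((n.factorial : ℂ))⁻¹)
    (r s n : ℕ) (hs : s ≤ r) (x : ℂ) :
    H (r - s) n x = ∑ l ∈ range (n + 1),
      ((n.choose l : ℂ) * ∑ m ∈ range (min s l + 1),
        (s.choose m : ℂ) / (1 - lam) ^ m * (surjCount l m : ℂ)) * H r (n - l) x := by
  have h1l : (1 : ℂ) - lam ≠ 0 := sub_ne_zero.mpr (Ne.symm hlam)
  set E := PowerSeries.exp ℂ - PowerSeries.C (R := ℂ) lam with hEdef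
  set A : ℕ → ℂ⟦X⟧ := fun t => PowerSeries.mk fun n => H t n x * ((n.factorial : ℂ))⁻¹ with hA
  set X0 : ℂ⟦X⟧ := PowerSeries.mk fun n => x ^ n * ((n.factorial : ℂ))⁻¹ with hX0
  have hE0 : PowerSeries.constantCoeff (R := ℂ) E = 1 - lam := by
    simp [hEdef, PowerSeries.constantCoeff_exp]
  have hEne : E ≠ 0 := by
    intro h
    rw [h, map_zero] at hE0
    exact h1l hE0.symm
  -- key power series identity
  have key : PowerSeries.C (R := ℂ) ((1 - lam) ^ s) * A (r - s) = E ^ s * A r := by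
    apply mul_right_cancel₀ (pow_ne_zero r hEne)
    have hr : E ^ r = E ^ (r - s) * E ^ s := by rw [← pow_add, Nat.sub_add_cancel hs]
    have lhs_eq : PowerSeries.C (R := ℂ) ((1 - lam) ^ s) * A (r - s) * E ^ r
        = PowerSeries.C (R := ℂ) ((1 - lam) ^ s) * (A (r - s) * E ^ (r - s)) * E ^ s := by
      rw [hr]; ring
    have rhs_eq : (E ^ s * A r) * E ^ r = (A r * E ^ r) * E ^ s := by ring
    rw [lhs_eq, rhs_eq, hH (r - s) x, hH r x, ← mul_assoc, ← map_mul, ← pow_add,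
      Nat.add_sub_cancel' hs]
  -- expand E^s
  have hEsplit : E = (PowerSeries.exp ℂ - 1) + PowerSeries.C (R := ℂ) (1 - lam) := by
    rw [map_sub, map_one]; ring
  have hpow : E ^ s = ∑ m ∈ range (s + 1),
      (PowerSeries.exp ℂ - 1) ^ m * PowerSeries.C (R := ℂ) (1 - lam) ^ (s - m) * (s.choose m : ℂ⟦X⟧) := by
    rw [hEsplit, add_pow]
  have hql : ∀ l : ℕ, PowerSeries.coeff (R := ℂ) l (E ^ s) = ∑ m ∈ range (s + 1),
      (surjCount l m : ℂ) * ((l.factorial : ℂ))⁻¹ * (1 - lam) ^ (s - m) * (s.choose m : ℂ) := by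
    intro l
    rw [hpow, map_sum]
    refine Finset.sum_congr rfl fun m _ => ?_
    rw [← map_pow, ← map_natCast (PowerSeries.C (R := ℂ)) (s.choose m), PowerSeries.coeff_mul_C,
      PowerSeries.coeff_mul_C, coeff_exp_sub_one_pow]
  -- take coefficients
  have hcoeff := congrArg (PowerSeries.coeff (R := ℂ) n) key
  rw [PowerSeries.coeff_C_mul, PowerSeries.coeff_mul,
    Finset.Nat.sum_antidiagonal_eq_sum_range_succ_mk, hA] at hcoeff
  simp only [PowerSeries.coeff_mk] at hcoeff
  have hfac : ∀ t : ℕ, ((t.factorial : ℂ)) ≠ 0 := fun t => by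
    exact_mod_cast t.factorial_pos.ne'
  have hcs : ((1 - lam) ^ s : ℂ) ≠ 0 := pow_ne_zero _ h1l
  have hmain : H (r - s) n x = (n.factorial : ℂ) * (((1 - lam) ^ s)⁻¹) *
      ∑ l ∈ range (n + 1), PowerSeries.coeff (R := ℂ) l (E ^ s) *
        (H r (n - l) x * (((n - l).factorial : ℂ))⁻¹) := by
    rw [← hcoeff]
    calc H (r - s) n x
        = H (r - s) n x * (((1 - lam) ^ s)⁻¹ * (1 - lam) ^ s) *
          (((n.factorial : ℂ))⁻¹ * (n.factorial : ℂ)) := by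
          rw [inv_mul_cancel₀ hcs, inv_mul_cancel₀ (hfac n), mul_one, mul_one]
      _ = (n.factorial : ℂ) * (((1 - lam) ^ s)⁻¹) *
          ((1 - lam) ^ s * (H (r - s) n x * ((n.factorial : ℂ))⁻¹)) := by ring
  rw [hmain, Finset.mul_sum]
  refine Finset.sum_congr rfl fun l hl => ?_
  rw [mem_range] at hl
  have hln : l ≤ n := Nat.lt_succ_iff.mp hl
  -- extend the inner sum on the RHS to range (s+1)
  have hext : ∑ m ∈ range (min s l + 1), (s.choose m : ℂ) / (1 - lam) ^ m * (surjCount l m : ℂ)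
      = ∑ m ∈ range (s + 1), (s.choose m : ℂ) / (1 - lam) ^ m * (surjCount l m : ℂ) := by
    refine Finset.sum_subset (Finset.range_subset_range.mpr (by omega)) fun m hm hm' => ?_
    rw [mem_range] at hm hm'
    have hml : l < m := by omega
    rw [surjCount_eq_zero hml, Nat.cast_zero, mul_zero]
  rw [hext, hql l]
  -- now a pure scalar computation
  simp only [Finset.mul_sum, Finset.sum_mul]
  refine Finset.sum_congr rfl fun m hm => ?_
  rw [mem_range] at hm
  have hms : m ≤ s := Nat.lt_succ_iff.mp hm
  have hpowm : ((1 - lam) ^ (s - m) : ℂ) = (1 - lam) ^ s / (1 - lam) ^ m := by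
    rw [eq_div_iff (pow_ne_zero _ h1l), ← pow_add, Nat.sub_add_cancel hms]
  rw [hpowm, Nat.cast_choose ℂ hln]
  field_simp
end

section
/- For all n ≥ 0 and r ≥ 1: H_n(x|λ) = ∑_{l=0}^{n} [ C(n,l) ∑_{m=0}^{min(r-1,l)} C(r-1,m)/(1-λ)^m · m! S(l,m) ] H_{n-l}^{(r)}(x|λ), where S(l,m) denotes the Stirling numbers of the second kind. -/
open Finset PowerSeries

/-- `m! S(l,m) = ∑_{k₁+⋯+k_m = l, k_j ≥ 1} (l choose k₁,…,k_m)`, i.e. `m!` times the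
Stirling number of the second kind. -/
def mFactStirling (l m : ℕ) : ℕ :=
  ∑ k ∈ (Finset.Nat.antidiagonalTuple m l).filter (fun k => ∀ j, 1 ≤ k j),
    Nat.multinomial Finset.univ k

lemma fact_ne (k : ℕ) : ((k.factorial : ℂ)) ≠ 0 :=
  Nat.cast_ne_zero.mpr k.factorial_ne_zero

lemma mFactStirling_eq_zero {l m : ℕ} (h : l < m) : mFactStirling l m = 0 := by
  refine Finset.sum_eq_zero fun k hk => ?_
  simp only [mem_filter, Finset.Nat.mem_antidiagonalTuple] at hk
  exact absurd (hk.1 ▸ Finset.card_fin m ▸ Finset.card_nsmul_le_sum univ k 1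
    (fun j _ => hk.2 j)) (by simpa using h.not_ge)

lemma sum_finsupp_eq_sum_tuple (m l : ℕ) (g : ℕ → ℂ) :
    ∑ f ∈ finsuppAntidiag (range m) l, ∏ i ∈ range m, g (f i)
      = ∑ k ∈ Finset.Nat.antidiagonalTuple m l, ∏ j, g (k j) := by
  refine Finset.sum_nbij' (fun f => fun j : Fin m => f j.val)
    (fun k => Finsupp.onFinset (range m)
      (fun i => if h : i < m then k ⟨i, h⟩ else 0) ?_) ?_ ?_ ?_ ?_ ?_
  · intro a ha
    by_contra hmem
    simp only [mem_range, not_lt] at hmem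
    rw [dif_neg (by omega)] at ha
    exact ha rfl
  · intro f hf
    simp only [mem_finsuppAntidiag] at hf
    rw [Finset.Nat.mem_antidiagonalTuple, ← hf.1, Finset.sum_range fun i => f i]
  · intro k hk
    rw [Finset.Nat.mem_antidiagonalTuple] at hk
    simp only [mem_finsuppAntidiag]
    constructor
    · rw [← hk, Finset.sum_range]
      refine Finset.sum_congr rfl fun i _ => ?_
      simp [Finsupp.onFinset_apply]
    · exact Finsupp.support_onFinset_subset
  · intro f hf
    simp only [mem_finsuppAntidiag] at hf
    ext a
    simp only [Finsupp.onFinset_apply]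
    split
    · rfl
    · rename_i h
      by_contra h0
      exact h (mem_range.mp (hf.2 (Finsupp.mem_support_iff.mpr (Ne.symm h0))))
  · intro k _
    funext j
    simp [Finsupp.onFinset_apply, j.isLt]
  · intro f _
    rw [Finset.prod_range fun i => g (f i)]

lemma coeff_exp_sub_one_s17 (j : ℕ) :
    coeff j (exp ℂ - 1) = if j = 0 then 0 else ((j.factorial : ℂ))⁻¹ := by
  rw [map_sub, coeff_exp, coeff_one]
  rcases eq_or_ne j 0 with rfl | h
  · simp
  · simp [h, one_div]

lemma coeff_pow_exp_sub_one (m l : ℕ) :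
    coeff l ((exp ℂ - 1) ^ m) = (mFactStirling l m : ℂ) * ((l.factorial : ℂ))⁻¹ := by
  rw [coeff_pow]
  rw [sum_finsupp_eq_sum_tuple m l fun j => coeff j (exp ℂ - 1)]
  rw [← Finset.sum_filter_add_sum_filter_not _ (fun k : Fin m → ℕ => ∀ j, 1 ≤ k j)]
  have h2 : ∑ k ∈ (Finset.Nat.antidiagonalTuple m l).filter
      (fun k => ¬ ∀ j, 1 ≤ k j), ∏ j, coeff (k j) (exp ℂ - 1) = 0 := by
    refine Finset.sum_eq_zero fun k hk => ?_
    simp only [mem_filter, not_forall, not_le, Nat.lt_one_iff] at hk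
    obtain ⟨j, hj⟩ := hk.2
    exact Finset.prod_eq_zero (Finset.mem_univ j) (by simp [coeff_exp_sub_one_s17, hj])
  rw [h2, add_zero, mFactStirling, Nat.cast_sum, Finset.sum_mul]
  refine Finset.sum_congr rfl fun k hk => ?_
  simp only [mem_filter, Finset.Nat.mem_antidiagonalTuple] at hk
  have hc : ∀ j : Fin m, coeff (k j) (exp ℂ - 1) = (((k j).factorial : ℂ))⁻¹ := by
    intro j
    rw [coeff_exp_sub_one_s17, if_neg (by have := hk.2 j; omega)]
  rw [Finset.prod_congr rfl fun j _ => hc j]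
  have hspec := Nat.multinomial_spec Finset.univ k
  rw [hk.1] at hspec
  have hcast : (∏ j, ((k j).factorial : ℂ)) * (Nat.multinomial Finset.univ k : ℂ)
      = (l.factorial : ℂ) := by exact_mod_cast congrArg (Nat.cast (R := ℂ)) hspec
  have hprodne : (∏ j, ((k j).factorial : ℂ)) ≠ 0 :=
    Finset.prod_ne_zero_iff.mpr fun j _ => fact_ne _
  rw [Finset.prod_inv_distrib]
  set P := ∏ j : Fin m, ((k j).factorial : ℂ) with hP
  set Q := (Nat.multinomial Finset.univ k : ℂ) with hQ
  have hPne : P ≠ 0 := hprodne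
  have hQl : Q = (l.factorial : ℂ) * P⁻¹ := by
    field_simp
    linear_combination hcast
  rw [hQl]
  field_simp [fact_ne l]

/-- For `r ≥ 1`:
`Hₙ(x|λ) = ∑_{l=0}^{n} [C(n,l) ∑_{m=0}^{min(r-1,l)} C(r-1,m)/(1-λ)ᵐ · m!S(l,m)] H_{n-l}⁽ʳ⁾(x|λ)`. -/
theorem frobenius_euler_in_order_r (lam : ℂ) (hlam : lam ≠ 1)
    (H : ℕ → ℕ → ℂ → ℂ)
    (hH : ∀ (r : ℕ) (x : ℂ),
      (PowerSeries.mk fun n => H r n x * ((n.factorial : ℂ))⁻¹) *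
        (PowerSeries.exp ℂ - PowerSeries.C lam) ^ r =
      PowerSeries.C ((1 - lam) ^ r) *
        PowerSeries.mk fun n => x ^ n * ((n.factorial : ℂ))⁻¹)
    (n r : ℕ) (hr : 1 ≤ r) (x : ℂ) :
    H 1 n x = ∑ l ∈ range (n + 1),
      ((n.choose l : ℂ) * ∑ m ∈ range (min (r - 1) l + 1),
        ((r - 1).choose m : ℂ) / (1 - lam) ^ m * (mFactStirling l m : ℂ)) *
        H r (n - l) x := by
  obtain ⟨s, rfl⟩ : ∃ s, r = s + 1 := ⟨r - 1, (Nat.succ_pred_eq_of_pos hr).symm⟩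
  simp only [Nat.add_sub_cancel]
  have hne : (1 : ℂ) - lam ≠ 0 := sub_ne_zero.mpr (Ne.symm hlam)
  have hu0 : (exp ℂ - C lam) ≠ 0 := by
    intro h
    apply hne
    have := congrArg (constantCoeff) h
    simpa [constantCoeff_exp] using this
  have h1 := hH 1 x
  have hr' := hH (s + 1) x
  rw [pow_one, pow_one] at h1
  rw [map_pow] at hr'
  have key : (C (1 - lam)) ^ s * (PowerSeries.mk fun n => H 1 n x * ((n.factorial : ℂ))⁻¹)
      = (exp ℂ - C lam) ^ s *
        (PowerSeries.mk fun n => H (s + 1) n x * ((n.factorial : ℂ))⁻¹) := by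
    apply mul_right_cancel₀ (pow_ne_zero (s + 1) hu0)
    linear_combination (C (1 - lam)) ^ s * (exp ℂ - C lam) ^ s * h1 -
      (exp ℂ - C lam) ^ s * hr'
  -- coefficient of u^s
  have hus : ∀ l : ℕ, coeff l ((exp ℂ - C lam) ^ s) =
      ∑ m ∈ range (s + 1),
        (mFactStirling l m : ℂ) * ((l.factorial : ℂ))⁻¹ * (1 - lam) ^ (s - m)
          * (s.choose m : ℂ) := by
    intro l
    have hsplit : exp ℂ - C lam = (exp ℂ - 1) + C (1 - lam) := by
      rw [map_sub, map_one]; ring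
    rw [hsplit, add_pow, map_sum]
    refine Finset.sum_congr rfl fun m hm => ?_
    rw [← map_pow, ← map_natCast C (s.choose m), mul_assoc, ← map_mul,
      coeff_mul_C, coeff_pow_exp_sub_one]
    push_cast
    ring
  -- extract coefficient n from key
  have hco := congrArg (coeff n) key
  rw [← map_pow, coeff_C_mul, coeff_mk, coeff_mul,
    Finset.Nat.sum_antidiagonal_eq_sum_range_succ_mk] at hco
  simp only [coeff_mk, hus] at hco
  -- now massage the goal
  have hgoal : ∀ l ∈ range (n + 1),
      ((n.choose l : ℂ) * ∑ m ∈ range (min s l + 1),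
        (s.choose m : ℂ) / (1 - lam) ^ m * (mFactStirling l m : ℂ)) * H (s + 1) (n - l) x
      = ((n.choose l : ℂ) * ∑ m ∈ range (s + 1),
        (s.choose m : ℂ) / (1 - lam) ^ m * (mFactStirling l m : ℂ)) * H (s + 1) (n - l) x := by
    intro l _
    congr 2
    refine (Finset.sum_subset (Finset.range_subset_range.mpr (by omega)) fun m hm hnot => ?_)
    simp only [mem_range] at hm hnot
    have hlm : l < m := by omega
    rw [mFactStirling_eq_zero hlm]
    simp
  rw [Finset.sum_congr rfl hgoal]
  -- cancel (1-lam)^s and n!⁻¹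
  apply mul_left_cancel₀ (pow_ne_zero s hne)
  apply mul_right_cancel₀ (inv_ne_zero (fact_ne n))
  calc (1 - lam) ^ s * H 1 n x * ((n.factorial : ℂ))⁻¹
      = (1 - lam) ^ s * (H 1 n x * ((n.factorial : ℂ))⁻¹) := by ring
    _ = ∑ l ∈ range (n + 1),
          (∑ m ∈ range (s + 1), (mFactStirling l m : ℂ) * ((l.factorial : ℂ))⁻¹
            * (1 - lam) ^ (s - m) * (s.choose m : ℂ))
          * (H (s + 1) (n - l) x * (((n - l).factorial : ℂ))⁻¹) := hco
    _ = (1 - lam) ^ s * (∑ l ∈ range (n + 1),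
          ((n.choose l : ℂ) * ∑ m ∈ range (s + 1),
            (s.choose m : ℂ) / (1 - lam) ^ m * (mFactStirling l m : ℂ))
            * H (s + 1) (n - l) x) * ((n.factorial : ℂ))⁻¹ := by
      simp only [Finset.mul_sum, Finset.sum_mul]
      refine Finset.sum_congr rfl fun l hl => ?_
      rw [mem_range] at hl
      have hln : l ≤ n := by omega
      have hch : ((n.choose l : ℂ)) * (l.factorial : ℂ) * ((n - l).factorial : ℂ)
          = (n.factorial : ℂ) := by
        exact_mod_cast congrArg (Nat.cast (R := ℂ))
          (Nat.choose_mul_factorial_mul_factorial hln)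
      refine Finset.sum_congr rfl fun m hm => ?_
      rw [mem_range] at hm
      have hms : m ≤ s := by omega
      rw [pow_sub₀ _ hne hms]
      have hch' : ((n.choose l : ℕ) : ℂ) = (n.factorial : ℂ) * ((l.factorial : ℂ))⁻¹
          * (((n - l).factorial : ℂ))⁻¹ := by
        rw [← hch]
        field_simp [fact_ne]
        rw [mul_assoc, mul_div_assoc, div_self (mul_ne_zero (fact_ne _) (fact_ne _)), mul_one]
      rw [hch']
      field_simp [fact_ne]
      linear_combination (-((mFactStirling l m : ℂ) * (s.choose m : ℂ) * H (s + 1) (n - l) x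
        * ((l.factorial : ℂ))⁻¹ * (((n - l).factorial : ℂ))⁻¹)) * mul_inv_cancel₀ (fact_ne n)
end
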